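/- Let p₁, ..., p₆ be six points arranged so that the closed L∞-balls of radius δ around pᵢ and pⱼ intersect if and only if i and j are adjacent in the 6-cycle (indices mod 6). Consider three chains each consisting of two antipodal points: A = {p₁, p₄}, B = {p₂, p₅}, C = {p₃, p₆}. Then any two of the chains A, B, C can be δ-satisfied by a single 2-point supermarket chain, but A, B, C cannot all be δ-satisfied by a single 2-point supermarket chain. -/
import Mathlib


/-- L∞ distance in the plane. -/
def dinf (p q : ℝ × ℝ) : ℝ := max |p.1 - q.1| |p.2 - q.2|

/-- A 2-point supermarket chain `(s₁, s₂)` δ-satisfies the 2-point chain `(a, b)`. -/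
def Sat2 (δ : ℝ) (s₁ s₂ a b : ℝ × ℝ) : Prop :=
  (dinf s₁ a ≤ δ ∧ dinf s₂ b ≤ δ) ∨ (dinf s₁ b ≤ δ ∧ dinf s₂ a ≤ δ)

/-- Six points whose δ-balls intersect exactly for neighbors on a 6-cycle, grouped into
three chains of antipodal pairs `(p 0, p 3)`, `(p 1, p 4)`, `(p 2, p 5)`: any two of the
chains can be δ-satisfied by one 2-point supermarket chain, but not all three. -/
theorem city_three_chains (δ : ℝ) (hδ : 0 < δ) (p : Fin 6 → ℝ × ℝ)
    (hadj : ∀ i j : Fin 6, i ≠ j →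
      ((∃ q : ℝ × ℝ, dinf q (p i) ≤ δ ∧ dinf q (p j) ≤ δ) ↔
        ((i.val + 1) % 6 = j.val ∨ (j.val + 1) % 6 = i.val))) :
    (∃ s₁ s₂ : ℝ × ℝ, Sat2 δ s₁ s₂ (p 0) (p 3) ∧ Sat2 δ s₁ s₂ (p 1) (p 4)) ∧
    (∃ s₁ s₂ : ℝ × ℝ, Sat2 δ s₁ s₂ (p 1) (p 4) ∧ Sat2 δ s₁ s₂ (p 2) (p 5)) ∧
    (∃ s₁ s₂ : ℝ × ℝ, Sat2 δ s₁ s₂ (p 0) (p 3) ∧ Sat2 δ s₁ s₂ (p 2) (p 5)) ∧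
    ¬ ∃ s₁ s₂ : ℝ × ℝ, Sat2 δ s₁ s₂ (p 0) (p 3) ∧ Sat2 δ s₁ s₂ (p 1) (p 4) ∧
        Sat2 δ s₁ s₂ (p 2) (p 5) := by

  obtain ⟨q01, h01a, h01b⟩ := (hadj 0 1 (by decide)).mpr (by decide)
  obtain ⟨q12, h12a, h12b⟩ := (hadj 1 2 (by decide)).mpr (by decide)
  obtain ⟨q23, h23a, h23b⟩ := (hadj 2 3 (by decide)).mpr (by decide)
  obtain ⟨q34, h34a, h34b⟩ := (hadj 3 4 (by decide)).mpr (by decide)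
  obtain ⟨q45, h45a, h45b⟩ := (hadj 4 5 (by decide)).mpr (by decide)
  obtain ⟨q50, h50a, h50b⟩ := (hadj 5 0 (by decide)).mpr (by decide)
  refine ⟨⟨q01, q34, Or.inl ⟨h01a, h34a⟩, Or.inl ⟨h01b, h34b⟩⟩,
    ⟨q12, q45, Or.inl ⟨h12a, h45a⟩, Or.inl ⟨h12b, h45b⟩⟩,
    ⟨q50, q23, Or.inl ⟨h50b, h23b⟩, Or.inr ⟨h50a, h23a⟩⟩, ?_⟩
  rintro ⟨s₁, s₂, hA, hB, hC⟩
  have h1 : dinf s₁ (p 0) ≤ δ ∨ dinf s₁ (p 3) ≤ δ := hA.imp And.left And.left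
  have h2 : dinf s₁ (p 1) ≤ δ ∨ dinf s₁ (p 4) ≤ δ := hB.imp And.left And.left
  have h3 : dinf s₁ (p 2) ≤ δ ∨ dinf s₁ (p 5) ≤ δ := hC.imp And.left And.left
  rcases h1 with h1 | h1 <;> rcases h2 with h2 | h2 <;> rcases h3 with h3 | h3
  · exact absurd ((hadj 0 2 (by decide)).mp ⟨s₁, h1, h3⟩) (by decide)
  · exact absurd ((hadj 1 5 (by decide)).mp ⟨s₁, h2, h3⟩) (by decide)
  · exact absurd ((hadj 0 4 (by decide)).mp ⟨s₁, h1, h2⟩) (by decide)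
  · exact absurd ((hadj 0 4 (by decide)).mp ⟨s₁, h1, h2⟩) (by decide)
  · exact absurd ((hadj 3 1 (by decide)).mp ⟨s₁, h1, h2⟩) (by decide)
  · exact absurd ((hadj 3 1 (by decide)).mp ⟨s₁, h1, h2⟩) (by decide)
  · exact absurd ((hadj 4 2 (by decide)).mp ⟨s₁, h2, h3⟩) (by decide)
  · exact absurd ((hadj 3 5 (by decide)).mp ⟨s₁, h1, h3⟩) (by decide)
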